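/- (Implicit equation for the Neumann eigenvalues of the fiber operator) Let b > 0, k ∈ ℝ and λ < b, set a = 1/2 − λ/(2b) > 0, and define v(r) = e^{−b·r²/4}·r^{k}·U(a, k+1, b·r²/2) for r > 0. Then v'(1) = e^{−b/4}·[ (k − b/2)·U(a, k+1, b/2) + (λ/2 − b/2)·U(a+1, k+2, b/2) ]. In particular, v'(1) = 0 if and only if (k − b/2)·U(a, k+1, b/2) + (λ/2 − b/2)·U(a+1, k+2, b/2) = 0. -/

import Mathlib

open MeasureTheory Set

/-- The confluent hypergeometric function of the second kind, defined for `a > 0`, `z > 0`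
by its integral representation `U(a,c,z) = (1/Γ(a))·∫₀^∞ e^{−zt} t^{a−1} (1+t)^{c−a−1} dt`. -/
noncomputable def hypergeometricU (a c z : ℝ) : ℝ :=
  (1 / Real.Gamma a) *
    ∫ t in Set.Ioi (0:ℝ), Real.exp (-z * t) * t ^ (a - 1) * (1 + t) ^ (c - a - 1)

/-- Implicit equation for the Neumann eigenvalues of the fiber operator: with
`a = 1/2 − λ/(2b) > 0` and `v(r) = e^{−br²/4} r^k U(a, k+1, br²/2)`, one has
`v'(1) = e^{−b/4}·[(k − b/2)·U(a, k+1, b/2) + (λ/2 − b/2)·U(a+1, k+2, b/2)]`;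
in particular `v'(1) = 0` iff the bracket vanishes. -/
lemma contOn_aux (x p q : ℝ) :
    ContinuousOn (fun t : ℝ => Real.exp (-x * t) * t ^ p * (1 + t) ^ q) (Set.Ioi 0) := by
  apply ContinuousOn.mul
  · apply ContinuousOn.mul
    · exact (Real.continuous_exp.comp (continuous_const.mul continuous_id)).continuousOn
    · exact fun t ht => (Real.continuousAt_rpow_const t p (Or.inl (ne_of_gt ht))).continuousWithinAt
  · intro t ht
    have ht0 : (0:ℝ) < t := ht
    exact ((continuousAt_const.add continuousAt_id).rpow_const
      (Or.inl (by positivity : (1:ℝ) + t ≠ 0))).continuousWithinAt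

lemma integrable_U_aux {a z : ℝ} (c : ℝ) (ha : 0 < a) (hz : 0 < z) :
    IntegrableOn (fun t : ℝ => Real.exp (-z * t) * t ^ (a - 1) * (1 + t) ^ (c - a - 1))
      (Set.Ioi 0) := by
  set q := c - a - 1 with hq
  set M := max q 0 with hM
  have hbound : ∀ t ∈ Set.Ioi (0:ℝ),
      ‖Real.exp (-z * t) * t ^ (a - 1) * (1 + t) ^ q‖ ≤
        (2:ℝ) ^ |q| * (t ^ (a-1) * Real.exp (-z * t) + t ^ (a-1+M) * Real.exp (-z * t)) := by
    intro t ht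
    have ht0 : (0:ℝ) < t := ht
    have h1t : (0:ℝ) < 1 + t := by linarith
    have key : (1 + t) ^ q ≤ (2:ℝ) ^ |q| * (1 + t ^ M) := by
      rcases le_or_gt 0 q with hq0 | hq0
      · have hM' : M = q := max_eq_left hq0
        have h2 : 1 + t ≤ 2 * max 1 t := by
          rcases le_total 1 t with h | h
          · rw [max_eq_right h]; linarith
          · rw [max_eq_left h]; linarith
        calc (1 + t) ^ q ≤ (2 * max 1 t) ^ q :=
              Real.rpow_le_rpow h1t.le h2 hq0
          _ = 2 ^ q * (max 1 t) ^ q := Real.mul_rpow (by norm_num) (by positivity)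
          _ ≤ 2 ^ |q| * (1 + t ^ q) := by
              apply mul_le_mul
              · exact Real.rpow_le_rpow_of_exponent_le (by norm_num) (le_abs_self q)
              · rcases le_total 1 t with h | h
                · rw [max_eq_right h]
                  have : (0:ℝ) ≤ t ^ q := by positivity
                  linarith
                · rw [max_eq_left h, Real.one_rpow]
                  have : (0:ℝ) ≤ t ^ q := by positivity
                  linarith
              · positivity
              · positivity
          _ = 2 ^ |q| * (1 + t ^ M) := by rw [hM']
      · have : (1 + t) ^ q ≤ 1 :=
          Real.rpow_le_one_of_one_le_of_nonpos (by linarith) hq0.le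
        have h2 : (1:ℝ) ≤ 2 ^ |q| := Real.one_le_rpow (by norm_num) (abs_nonneg q)
        have h3 : (0:ℝ) ≤ t ^ M := by positivity
        nlinarith
    have hnn : 0 ≤ Real.exp (-z * t) * t ^ (a - 1) * (1 + t) ^ q := by positivity
    rw [Real.norm_eq_abs, abs_of_nonneg hnn]
    have : Real.exp (-z * t) * t ^ (a - 1) * (1 + t) ^ q ≤
        Real.exp (-z * t) * t ^ (a - 1) * ((2:ℝ) ^ |q| * (1 + t ^ M)) := by
      apply mul_le_mul_of_nonneg_left key (by positivity)
    refine this.trans (le_of_eq ?_)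
    have hpow : t ^ (a-1) * t ^ M = t ^ (a-1+M) := (Real.rpow_add ht0 _ _).symm
    rw [← hpow]; ring
  have hgint : IntegrableOn (fun t : ℝ =>
      (2:ℝ) ^ |q| * (t ^ (a-1) * Real.exp (-z * t) + t ^ (a-1+M) * Real.exp (-z * t)))
      (Set.Ioi 0) := by
    apply Integrable.const_mul
    apply Integrable.add
    · have := integrableOn_rpow_mul_exp_neg_mul_rpow (by linarith : (-1:ℝ) < a - 1) (zero_lt_one : (0:ℝ) < 1) hz
      simpa [Real.rpow_one, IntegrableOn] using this
    · have := integrableOn_rpow_mul_exp_neg_mul_rpow (by linarith [le_max_right q 0] :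
        (-1:ℝ) < a - 1 + M) (zero_lt_one : (0:ℝ) < 1) hz
      simpa [Real.rpow_one, IntegrableOn] using this
  have hm : AEStronglyMeasurable (fun t : ℝ => Real.exp (-z * t) * t ^ (a - 1) * (1 + t) ^ q)
      (volume.restrict (Set.Ioi 0)) :=
    (contOn_aux z (a-1) q).aestronglyMeasurable measurableSet_Ioi
  exact Integrable.mono' hgint hm ((ae_restrict_iff' measurableSet_Ioi).2 (ae_of_all _ hbound))


set_option maxHeartbeats 1000000 in
lemma hasDerivAt_U {a z : ℝ} (c : ℝ) (ha : 0 < a) (hz : 0 < z) :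
    HasDerivAt (fun x => hypergeometricU a c x)
      (-a * hypergeometricU (a + 1) (c + 1) z) z := by
  have ea : (a + 1) - 1 = a := by ring
  have ec : (c + 1) - (a + 1) - 1 = c - a - 1 := by ring
  have hmeas : ∀ᶠ x in nhds z, AEStronglyMeasurable
      (fun t : ℝ => Real.exp (-x * t) * t ^ (a - 1) * (1 + t) ^ (c - a - 1))
      (volume.restrict (Set.Ioi 0)) := by
    filter_upwards with x
    exact (contOn_aux x (a-1) (c-a-1)).aestronglyMeasurable measurableSet_Ioi
  have hint : Integrable (fun t : ℝ => Real.exp (-z * t) * t ^ (a - 1) * (1 + t) ^ (c - a - 1))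
      (volume.restrict (Set.Ioi 0)) := integrable_U_aux c ha hz
  have hmeas' : AEStronglyMeasurable
      (fun t : ℝ => -(Real.exp (-z * t) * t ^ a * (1 + t) ^ (c - a - 1)))
      (volume.restrict (Set.Ioi 0)) := by
    have h0 : ContinuousOn (fun t : ℝ => -(Real.exp (-z * t) * t ^ a * (1 + t) ^ (c - a - 1)))
        (Set.Ioi 0) := (contOn_aux z a (c-a-1)).neg
    exact h0.aestronglyMeasurable measurableSet_Ioi
  have hbnd : ∀ᵐ t ∂(volume.restrict (Set.Ioi (0:ℝ))), ∀ x ∈ Metric.ball z (z/2),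
      ‖-(Real.exp (-x * t) * t ^ a * (1 + t) ^ (c - a - 1))‖ ≤
        Real.exp (-(z/2) * t) * t ^ a * (1 + t) ^ (c - a - 1) := by
    rw [ae_restrict_iff' measurableSet_Ioi]
    filter_upwards with t ht x hx
    have ht0 : (0:ℝ) < t := ht
    have hx2 : z / 2 ≤ x := by
      rw [Metric.mem_ball, Real.dist_eq, abs_sub_lt_iff] at hx
      linarith [hx.2]
    have hexp : Real.exp (-x * t) ≤ Real.exp (-(z/2) * t) := by
      apply Real.exp_le_exp.2
      nlinarith
    have h1t : (0:ℝ) < 1 + t := by linarith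
    rw [norm_neg, Real.norm_eq_abs, abs_of_nonneg (by positivity)]
    have h1 : (0:ℝ) ≤ t ^ a := by positivity
    have h2 : (0:ℝ) ≤ (1 + t) ^ (c - a - 1) := by positivity
    exact mul_le_mul_of_nonneg_right (mul_le_mul_of_nonneg_right hexp h1) h2
  have hbint : Integrable
      (fun t : ℝ => Real.exp (-(z/2) * t) * t ^ a * (1 + t) ^ (c - a - 1))
      (volume.restrict (Set.Ioi 0)) := by
    have := integrable_U_aux (a := a + 1) (z := z/2) (c + 1) (by linarith) (half_pos hz)
    rwa [ea, ec] at this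
  have hdiff : ∀ᵐ t ∂(volume.restrict (Set.Ioi (0:ℝ))), ∀ x ∈ Metric.ball z (z/2),
      HasDerivAt (fun x => Real.exp (-x * t) * t ^ (a - 1) * (1 + t) ^ (c - a - 1))
        (-(Real.exp (-x * t) * t ^ a * (1 + t) ^ (c - a - 1))) x := by
    rw [ae_restrict_iff' measurableSet_Ioi]
    filter_upwards with t ht x hx
    have ht0 : (0:ℝ) < t := ht
    have h0 : HasDerivAt (fun y : ℝ => -y * t) (-t) x := by
      simpa using ((hasDerivAt_id x).neg.mul_const t)
    have h := ((h0.exp).mul_const (t ^ (a - 1))).mul_const ((1 + t) ^ (c - a - 1))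
    refine h.congr_deriv ?_
    have : t ^ a = t ^ (a - 1) * t := by
      rw [← Real.rpow_add_one ht0.ne' (a - 1)]; ring_nf
    rw [this]; ring
  have key := hasDerivAt_integral_of_dominated_loc_of_deriv_le (Metric.ball_mem_nhds z (half_pos hz))
    hmeas hint hmeas' hbnd hbint hdiff
  have hd : HasDerivAt (fun x => hypergeometricU a c x)
      ((1 / Real.Gamma a) *
        ∫ t in Set.Ioi (0:ℝ), -(Real.exp (-z * t) * t ^ a * (1 + t) ^ (c - a - 1))) z := by
    unfold hypergeometricU
    exact key.2.const_mul _
  convert hd using 1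
  rw [integral_neg]
  unfold hypergeometricU
  rw [ea, ec, Real.Gamma_add_one ha.ne']
  have hΓ : Real.Gamma a ≠ 0 := (Real.Gamma_pos_of_pos ha).ne'
  field_simp


theorem fiber_neumann_implicit_equation
    (b : ℝ) (hb : 0 < b) (k lam : ℝ) (hlam : lam < b)
    (a : ℝ) (ha : a = 1 / 2 - lam / (2 * b))
    (v : ℝ → ℝ)
    (hv : ∀ r, v r = Real.exp (-b * r ^ 2 / 4) * r ^ k * hypergeometricU a (k + 1) (b * r ^ 2 / 2)) :
    deriv v 1 = Real.exp (-b / 4) *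
        ((k - b / 2) * hypergeometricU a (k + 1) (b / 2)
          + (lam / 2 - b / 2) * hypergeometricU (a + 1) (k + 2) (b / 2)) ∧
    (deriv v 1 = 0 ↔
      (k - b / 2) * hypergeometricU a (k + 1) (b / 2)
        + (lam / 2 - b / 2) * hypergeometricU (a + 1) (k + 2) (b / 2) = 0) := by
  have hb2 : (0:ℝ) < b / 2 := by linarith
  have ha0 : 0 < a := by
    rw [ha, sub_pos, div_lt_iff₀ (by linarith : (0:ℝ) < 2 * b)]
    linarith
  have hU := hasDerivAt_U (a := a) (z := b/2) (k+1) ha0 hb2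
  have ek : (k + 1) + 1 = k + 2 := by ring
  rw [ek] at hU
  have e1 : b * (1:ℝ) ^ 2 / 2 = b / 2 := by norm_num
  have hinner : HasDerivAt (fun r : ℝ => b * r ^ 2 / 2) b 1 := by
    have := ((hasDerivAt_pow 2 (1:ℝ)).const_mul b).div_const 2
    simpa using this
  have h3 : HasDerivAt (fun r : ℝ => hypergeometricU a (k+1) (b * r ^ 2 / 2))
      ((-a * hypergeometricU (a+1) (k+2) (b/2)) * b) 1 := by
    have hU' : HasDerivAt (fun x => hypergeometricU a (k+1) x)
        (-a * hypergeometricU (a+1) (k+2) (b/2)) (b * (1:ℝ) ^ 2 / 2) := by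
      rw [e1]; exact hU
    exact HasDerivAt.comp (h := fun r : ℝ => b * r ^ 2 / 2) 1 hU' hinner
  have h1 : HasDerivAt (fun r : ℝ => Real.exp (-b * r ^ 2 / 4))
      (Real.exp (-b / 4) * (-b / 2)) 1 := by
    have hin : HasDerivAt (fun r : ℝ => -b * r ^ 2 / 4) (-b / 2) 1 := by
      have h0 := ((hasDerivAt_pow 2 (1:ℝ)).const_mul (-b)).div_const 4
      have e0 : -b * (↑(2:ℕ) * (1:ℝ) ^ (2-1)) / 4 = -b / 2 := by push_cast; ring
      rw [e0] at h0
      exact h0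
    have h4 := hin.exp
    have e2 : -b * (1:ℝ) ^ 2 / 4 = -b / 4 := by norm_num
    rw [e2] at h4
    exact h4
  have h2 : HasDerivAt (fun r : ℝ => r ^ k) k 1 := by
    have := Real.hasDerivAt_rpow_const (x := (1:ℝ)) (p := k) (Or.inl one_ne_zero)
    simpa using this
  have hD := (h1.mul h2).mul h3
  have hab : -a * b = lam / 2 - b / 2 := by
    rw [ha]; field_simp; ring
  have hc : deriv v 1 = Real.exp (-b / 4) *
      ((k - b / 2) * hypergeometricU a (k + 1) (b / 2)
        + (lam / 2 - b / 2) * hypergeometricU (a + 1) (k + 2) (b / 2)) := by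
    have hveq : v = fun r => Real.exp (-b * r ^ 2 / 4) * r ^ k *
        hypergeometricU a (k + 1) (b * r ^ 2 / 2) := funext hv
    have hD' := hD.deriv
    simp only [Pi.mul_def] at hD'
    rw [hveq, hD']
    rw [Real.one_rpow, e1]
    norm_num
    rw [← hab]
    ring
  refine ⟨hc, ?_⟩
  rw [hc, mul_eq_zero]
  simp [Real.exp_ne_zero]
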